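/- Let n ≥ 2 be an integer, let k > 1 and α ∈ (1/2, 1] be real constants with p = k/n^α < 1/2, set ℓ = ⌊1/p⌋, and partition the index set {1,…,n} into M = ⌈n/ℓ⌉ consecutive blocks, the first M−1 of size ℓ and the last of size n − (M−1)ℓ ≤ ℓ. Suppose each of the n indices is deleted independently with probability p, and for m = 1,…,M let Y_m denote the number of deleted indices in block m. Then for every integer δ ≥ 1, the probability that some block suffers at least δ deletions satisfies P(∃ m : Y_m ≥ δ) < (2k+1) n^{1−α} exp( −(1/2)(δ ln δ − δ + 1) ). -/

import Mathlib

open MeasureTheory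
open scoped ENNReal

/-- The number of deleted indices in block m (1-indexed blocks of size l, the last
block possibly shorter): the number of indices i (0-indexed) with
(m-1) l <= i < m l that are deleted in the outcome omega. -/
def blockDeletions (n ℓ m : ℕ) (ω : Fin n → Bool) : ℕ :=
  (Finset.univ.filter
    (fun i : Fin n => (m - 1) * ℓ ≤ (i : ℕ) ∧ (i : ℕ) < m * ℓ ∧ ω i = true)).card

lemma aux_pow_succ (m : ℕ) (hm : 1 ≤ m) :
    ((m : ℝ) + 1) ^ m ≤ Real.exp 1 * (m : ℝ) ^ m := by
  have hm0 : (0:ℝ) < m := by exact_mod_cast hm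
  have h1 : ((m:ℝ) + 1) = m * (1 + 1/m) := by field_simp
  rw [h1, mul_pow]
  have h2 : (1 + 1/(m:ℝ)) ^ m ≤ Real.exp 1 := by
    have hle : (1 + 1/(m:ℝ)) ≤ Real.exp (1/m) := by
      have := Real.add_one_le_exp (1/(m:ℝ)); linarith
    calc (1 + 1/(m:ℝ)) ^ m ≤ (Real.exp (1/m)) ^ m :=
          pow_le_pow_left₀ (by positivity) hle m
      _ = Real.exp (m * (1/m)) := (Real.exp_nat_mul _ m).symm
      _ = Real.exp 1 := by rw [mul_one_div, div_self hm0.ne']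
  calc (m:ℝ)^m * (1 + 1/m)^m ≤ (m:ℝ)^m * Real.exp 1 :=
        mul_le_mul_of_nonneg_left h2 (by positivity)
    _ = Real.exp 1 * (m:ℝ)^m := mul_comm _ _

lemma aux_pow_le_factorial (δ : ℕ) (hδ : 1 ≤ δ) :
    (δ : ℝ) ^ δ ≤ (δ.factorial : ℝ) * Real.exp ((δ : ℝ) - 1) := by
  induction δ, hδ using Nat.le_induction with
  | base => simp
  | succ m hm ih =>
    have hm0 : (0:ℝ) < m := by exact_mod_cast hm
    have h1 : ((m + 1 : ℕ) : ℝ) ^ (m + 1) = ((m:ℝ)+1) * ((m:ℝ)+1)^m := by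
      push_cast; ring
    rw [h1]
    have h2 : ((m:ℝ)+1) * ((m:ℝ)+1)^m ≤ ((m:ℝ)+1) * (Real.exp 1 * (m:ℝ)^m) :=
      mul_le_mul_of_nonneg_left (aux_pow_succ m hm) (by positivity)
    have h3 : (m:ℝ)^m ≤ (m.factorial : ℝ) * Real.exp ((m:ℝ) - 1) := ih
    have h4 : ((m:ℝ)+1) * (Real.exp 1 * (m:ℝ)^m)
        ≤ ((m:ℝ)+1) * (Real.exp 1 * ((m.factorial : ℝ) * Real.exp ((m:ℝ) - 1))) := by
      have := mul_le_mul_of_nonneg_left h3 (Real.exp_pos 1).le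
      exact mul_le_mul_of_nonneg_left this (by positivity)
    have h5 : ((m:ℝ)+1) * (Real.exp 1 * ((m.factorial : ℝ) * Real.exp ((m:ℝ) - 1)))
        = ((m+1).factorial : ℝ) * Real.exp (((m+1:ℕ):ℝ) - 1) := by
      rw [Nat.factorial_succ]
      push_cast
      rw [show (m:ℝ) + 1 - 1 = 1 + ((m:ℝ) - 1) by ring, Real.exp_add]
      ring
    linarith

lemma aux_exp_le_factorial (δ : ℕ) (hδ : 1 ≤ δ) :
    Real.exp ((δ:ℝ) * Real.log δ - δ + 1) ≤ (δ.factorial : ℝ) := by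
  have hδ0 : (0:ℝ) < δ := by exact_mod_cast hδ
  have h1 : Real.exp ((δ:ℝ) * Real.log δ) = (δ:ℝ) ^ δ := by
    rw [Real.exp_nat_mul, Real.exp_log hδ0]
  have h2 : Real.exp ((δ:ℝ) * Real.log δ - δ + 1)
      = (δ:ℝ)^δ * Real.exp (1 - δ) := by
    rw [← h1, ← Real.exp_add]
    congr 1
    ring
  rw [h2]
  have h3 := aux_pow_le_factorial δ hδ
  calc (δ:ℝ)^δ * Real.exp (1 - δ)
      ≤ ((δ.factorial : ℝ) * Real.exp ((δ:ℝ) - 1)) * Real.exp (1 - δ) :=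
        mul_le_mul_of_nonneg_right h3 (Real.exp_pos _).le
    _ = (δ.factorial : ℝ) := by
        rw [mul_assoc, ← Real.exp_add, show (δ:ℝ) - 1 + (1 - δ) = 0 by ring, Real.exp_zero,
          mul_one]


lemma pi_bern_all_true (n : ℕ) (p : ℝ) (hple : ENNReal.ofReal p ≤ 1)
    (S : Finset (Fin n)) :
    Measure.pi (fun _ : Fin n => (PMF.bernoulli (Real.toNNReal p) (ENNReal.coe_le_one_iff.mp hple)).toMeasure)
        {ω : Fin n → Bool | ∀ i ∈ S, ω i = true}
      = (ENNReal.ofReal p) ^ S.card := by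
  classical
  have hset : {ω : Fin n → Bool | ∀ i ∈ S, ω i = true}
      = Set.pi Set.univ (fun i => if i ∈ S then {true} else Set.univ) := by
    ext ω
    simp only [Set.mem_setOf_eq, Set.mem_pi, Set.mem_univ, forall_true_left]
    constructor
    · intro h i
      by_cases hi : i ∈ S
      · simp [hi, h i hi]
      · simp [hi]
    · intro h i hi
      have := h i
      simpa [hi] using this
  rw [hset, Measure.pi_pi]
  have hq : (PMF.bernoulli (Real.toNNReal p) (ENNReal.coe_le_one_iff.mp hple)).toMeasure ({true} : Set Bool)
      = ENNReal.ofReal p := by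
    rw [PMF.toMeasure_apply_singleton _ _ (measurableSet_singleton true)]
    rfl
  have : ∀ i : Fin n,
      (PMF.bernoulli (Real.toNNReal p) (ENNReal.coe_le_one_iff.mp hple)).toMeasure
        (if i ∈ S then ({true} : Set Bool) else Set.univ)
      = if i ∈ S then ENNReal.ofReal p else 1 := by
    intro i
    by_cases hi : i ∈ S
    · simp [hi, hq]
    · simp only [hi, if_false]
      exact measure_univ
  rw [Finset.prod_congr rfl (fun i _ => this i), Finset.prod_ite_mem,
    Finset.univ_inter, Finset.prod_const]


-- per-block bound
lemma block_bound (n ℓ m δ : ℕ) (p : ℝ) (hple : ENNReal.ofReal p ≤ 1) (hℓ0 : 1 ≤ m) :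
    Measure.pi (fun _ : Fin n => (PMF.bernoulli (Real.toNNReal p) (ENNReal.coe_le_one_iff.mp hple)).toMeasure)
        {ω : Fin n → Bool | δ ≤ blockDeletions n ℓ m ω}
      ≤ (Nat.choose ℓ δ : ℝ≥0∞) * (ENNReal.ofReal p) ^ δ := by
  classical
  set ν := Measure.pi (fun _ : Fin n => (PMF.bernoulli (Real.toNNReal p) (ENNReal.coe_le_one_iff.mp hple)).toMeasure)
  set B : Finset (Fin n) :=
    Finset.univ.filter (fun i : Fin n => (m - 1) * ℓ ≤ (i : ℕ) ∧ (i : ℕ) < m * ℓ) with hB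
  have hBcard : B.card ≤ ℓ := by
    have h1 : B.card ≤ (Finset.Ico ((m - 1) * ℓ) (m * ℓ)).card := by
      apply Finset.card_le_card_of_injOn (fun i : Fin n => (i : ℕ))
      · intro i hi
        simp only [hB, Finset.mem_coe, Finset.mem_filter, Finset.mem_univ, true_and] at hi
        simp [Finset.mem_Ico, hi.1, hi.2]
      · exact Function.Injective.injOn (Fin.val_injective)
    have h2 : (Finset.Ico ((m - 1) * ℓ) (m * ℓ)).card = m * ℓ - (m - 1) * ℓ :=
      Nat.card_Ico _ _
    have h3 : m * ℓ - (m - 1) * ℓ ≤ ℓ := by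
      have : m * ℓ ≤ (m - 1) * ℓ + ℓ := by
        have : m ≤ (m - 1) + 1 := by omega
        calc m * ℓ ≤ ((m - 1) + 1) * ℓ := Nat.mul_le_mul_right ℓ this
          _ = (m - 1) * ℓ + ℓ := by ring
      omega
    omega
  have hsub : {ω : Fin n → Bool | δ ≤ blockDeletions n ℓ m ω}
      ⊆ ⋃ S ∈ Finset.powersetCard δ B, {ω : Fin n → Bool | ∀ i ∈ S, ω i = true} := by
    intro ω hω
    simp only [Set.mem_setOf_eq, blockDeletions] at hω
    set T : Finset (Fin n) :=
      Finset.univ.filter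
        (fun i : Fin n => (m - 1) * ℓ ≤ (i : ℕ) ∧ (i : ℕ) < m * ℓ ∧ ω i = true) with hT
    obtain ⟨S, hST, hScard⟩ := Finset.exists_subset_card_eq hω
    have hTB : T ⊆ B := by
      intro i hi
      simp only [hT, Finset.mem_filter, Finset.mem_univ, true_and] at hi
      simp [hB, hi.1, hi.2.1]
    simp only [Set.mem_iUnion]
    refine ⟨S, ?_, ?_⟩
    · exact Finset.mem_powersetCard.mpr ⟨hST.trans hTB, hScard⟩
    · intro i hi
      have := hST hi
      simp only [hT, Finset.mem_filter, Finset.mem_univ, true_and] at this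
      exact this.2.2
  calc ν {ω : Fin n → Bool | δ ≤ blockDeletions n ℓ m ω}
      ≤ ν (⋃ S ∈ Finset.powersetCard δ B, {ω : Fin n → Bool | ∀ i ∈ S, ω i = true}) :=
        measure_mono hsub
    _ ≤ ∑ S ∈ Finset.powersetCard δ B, ν {ω : Fin n → Bool | ∀ i ∈ S, ω i = true} :=
        measure_biUnion_finset_le _ _
    _ = ∑ S ∈ Finset.powersetCard δ B, (ENNReal.ofReal p) ^ δ := by
        apply Finset.sum_congr rfl
        intro S hS
        rw [pi_bern_all_true (hple := hple)]
        rw [(Finset.mem_powersetCard.mp hS).2]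
    _ = (Finset.powersetCard δ B).card * (ENNReal.ofReal p) ^ δ := by
        rw [Finset.sum_const, nsmul_eq_mul]
    _ ≤ (Nat.choose ℓ δ : ℝ≥0∞) * (ENNReal.ofReal p) ^ δ := by
        apply mul_le_mul_left
        rw [Finset.card_powersetCard]
        exact_mod_cast Nat.cast_le.mpr (Nat.choose_le_choose δ hBcard)

/-- Delete each of n indices independently with probability
p = k/n^alpha < 1/2 (k > 1, alpha in (1/2,1], n >= 2), and partition the indices
into M = ceil(n/l) consecutive blocks of size l = floor(1/p) (last block possibly
shorter). Then the probability that some block suffers at least delta deletions is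
less than (2k+1) n^(1-alpha) exp(-(1/2)(delta ln delta - delta + 1)). -/
theorem prob_some_block_many_deletions
    (n : ℕ) (hn : 2 ≤ n) (k α : ℝ) (hk : 1 < k) (hα1 : 1 / 2 < α) (hα2 : α ≤ 1)
    (p : ℝ) (hp : p = k / (n : ℝ) ^ α) (hp2 : p < 1 / 2)
    (ℓ : ℕ) (hℓ : ℓ = ⌊1 / p⌋₊)
    (M : ℕ) (hM : M = ⌈(n : ℝ) / (ℓ : ℝ)⌉₊)
    (hple : ENNReal.ofReal p ≤ 1)
    (μ : Measure (Fin n → Bool))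
    (hμ : μ = Measure.pi (fun _ : Fin n => (PMF.bernoulli (Real.toNNReal p) (ENNReal.coe_le_one_iff.mp hple)).toMeasure))
    (δ : ℕ) (hδ : 1 ≤ δ) :
    μ {ω | ∃ m ∈ Finset.Icc 1 M, δ ≤ blockDeletions n ℓ m ω}
      < ENNReal.ofReal ((2 * k + 1) * (n : ℝ) ^ (1 - α) *
          Real.exp (-(1 / 2) * ((δ : ℝ) * Real.log δ - (δ : ℝ) + 1))) := by
  classical
  have hn0 : (0:ℝ) < n := by positivity
  have hn2 : (2:ℝ) ≤ n := by exact_mod_cast hn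
  have hna : (0:ℝ) < (n:ℝ) ^ α := Real.rpow_pos_of_pos (by linarith) α
  have hp0 : 0 < p := by rw [hp]; positivity
  -- union bound
  have key : μ {ω | ∃ m ∈ Finset.Icc 1 M, δ ≤ blockDeletions n ℓ m ω}
      ≤ (M : ℝ≥0∞) * ((Nat.choose ℓ δ : ℝ≥0∞) * (ENNReal.ofReal p) ^ δ) := by
    rw [hμ]
    have hset : {ω : Fin n → Bool | ∃ m ∈ Finset.Icc 1 M, δ ≤ blockDeletions n ℓ m ω}
        = ⋃ m ∈ Finset.Icc 1 M, {ω : Fin n → Bool | δ ≤ blockDeletions n ℓ m ω} := by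
      ext ω; simp
    rw [hset]
    calc Measure.pi (fun _ : Fin n => (PMF.bernoulli (Real.toNNReal p) (ENNReal.coe_le_one_iff.mp hple)).toMeasure)
          (⋃ m ∈ Finset.Icc 1 M, {ω : Fin n → Bool | δ ≤ blockDeletions n ℓ m ω})
        ≤ ∑ m ∈ Finset.Icc 1 M,
            Measure.pi (fun _ : Fin n => (PMF.bernoulli (Real.toNNReal p) (ENNReal.coe_le_one_iff.mp hple)).toMeasure)
              {ω : Fin n → Bool | δ ≤ blockDeletions n ℓ m ω} :=
          measure_biUnion_finset_le _ _
      _ ≤ ∑ m ∈ Finset.Icc 1 M, (Nat.choose ℓ δ : ℝ≥0∞) * (ENNReal.ofReal p) ^ δ := by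
          apply Finset.sum_le_sum
          intro m hm
          exact block_bound n ℓ m δ p hple (Finset.mem_Icc.mp hm).1
      _ = (M : ℝ≥0∞) * ((Nat.choose ℓ δ : ℝ≥0∞) * (ENNReal.ofReal p) ^ δ) := by
          rw [Finset.sum_const, Nat.card_Icc, nsmul_eq_mul]
          norm_num
  -- convert to reals
  have hconv : (M : ℝ≥0∞) * ((Nat.choose ℓ δ : ℝ≥0∞) * (ENNReal.ofReal p) ^ δ)
      = ENNReal.ofReal ((M : ℝ) * ((Nat.choose ℓ δ : ℝ) * p ^ δ)) := by
    rw [ENNReal.ofReal_mul (by positivity), ENNReal.ofReal_mul (by positivity),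
      ENNReal.ofReal_natCast, ENNReal.ofReal_natCast, ENNReal.ofReal_pow hp0.le]
  -- real-side inequality
  have hreal : (M : ℝ) * ((Nat.choose ℓ δ : ℝ) * p ^ δ)
      < (2 * k + 1) * (n : ℝ) ^ (1 - α) *
          Real.exp (-(1 / 2) * ((δ : ℝ) * Real.log δ - (δ : ℝ) + 1)) := by
    have hip : (2:ℝ) < 1/p := by rw [lt_div_iff₀ hp0]; linarith
    have hl2 : 2 ≤ ℓ := by
      rw [hℓ]; exact Nat.le_floor (by exact_mod_cast hip.le)
    have hl0 : (0:ℝ) < ℓ := by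
      have : 0 < ℓ := by omega
      exact_mod_cast this
    have hlle : (ℓ:ℝ) ≤ 1/p := by rw [hℓ]; exact Nat.floor_le (by positivity)
    have hlp : (ℓ:ℝ) * p ≤ 1 := by
      calc (ℓ:ℝ)*p ≤ (1/p)*p := mul_le_mul_of_nonneg_right hlle hp0.le
        _ = 1 := by field_simp
    have hlgt : 1/(2*p) < (ℓ:ℝ) := by
      have h1 : (1/p - 1 : ℝ) < ℓ := by rw [hℓ]; exact Nat.sub_one_lt_floor _
      have h2 : 1/p - 1/(2*p) = 1/(2*p) := by field_simp; ring
      have h3 : (1:ℝ) < 1/(2*p) := by rw [lt_div_iff₀ (by positivity)]; linarith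
      linarith
    have hfac0 : (0:ℝ) < (δ.factorial : ℝ) := by exact_mod_cast δ.factorial_pos
    have h1 : (Nat.choose ℓ δ : ℝ) * p ^ δ ≤ 1 / (δ.factorial : ℝ) := by
      have hnat : δ.factorial * ℓ.choose δ ≤ ℓ ^ δ := by
        rw [← Nat.descFactorial_eq_factorial_mul_choose]
        exact Nat.descFactorial_le_pow ℓ δ
      have hcast : (δ.factorial : ℝ) * (ℓ.choose δ : ℝ) ≤ (ℓ:ℝ) ^ δ := by exact_mod_cast hnat
      have hone : (ℓ:ℝ)^δ * p^δ ≤ 1 := by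
        rw [← mul_pow]; exact pow_le_one₀ (by positivity) hlp
      rw [le_div_iff₀ hfac0]
      calc (ℓ.choose δ : ℝ) * p ^ δ * δ.factorial
          = ((δ.factorial:ℝ) * ℓ.choose δ) * p ^ δ := by ring
        _ ≤ (ℓ:ℝ)^δ * p^δ := mul_le_mul_of_nonneg_right hcast (by positivity)
        _ ≤ 1 := hone
    set X := (δ:ℝ) * Real.log δ - δ + 1 with hXdef
    have hδ1 : (1:ℝ) ≤ δ := by exact_mod_cast hδ
    have hXnn : 0 ≤ X := by
      have hlog := Real.log_le_sub_one_of_pos (show (0:ℝ) < 1/δ by positivity)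
      rw [Real.log_div one_ne_zero (by positivity), Real.log_one] at hlog
      have h4 : 1 - 1/(δ:ℝ) ≤ Real.log δ := by linarith
      have h5 : (δ:ℝ) * (1 - 1/δ) ≤ δ * Real.log δ :=
        mul_le_mul_of_nonneg_left h4 (by positivity)
      have h6 : (δ:ℝ) * (1 - 1/δ) = δ - 1 := by field_simp
      rw [hXdef]; linarith
    have hfle : 1/(δ.factorial : ℝ) ≤ Real.exp (-(1/2) * X) := by
      have hexp : Real.exp ((1/2) * X) ≤ (δ.factorial : ℝ) := by
        refine le_trans (Real.exp_le_exp.mpr ?_) (aux_exp_le_factorial δ hδ)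
        rw [hXdef]; linarith
      rw [show -(1/2) * X = -((1/2)*X) by ring, Real.exp_neg, ← one_div]
      exact one_div_le_one_div_of_le (Real.exp_pos _) hexp
    have hMlt : (M:ℝ) < (n:ℝ)/ℓ + 1 := by rw [hM]; exact Nat.ceil_lt_add_one (by positivity)
    have hnl : (n:ℝ)/ℓ < 2*k*(n:ℝ)^(1-α) := by
      have h7 : (n:ℝ)/ℓ < (n:ℝ)/(1/(2*p)) :=
        div_lt_div_of_pos_left hn0 (by positivity) hlgt
      have h8 : (n:ℝ)/(1/(2*p)) = 2*((n:ℝ)*p) := by field_simp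
      have hnp : (n:ℝ) * p = k * (n:ℝ)^(1-α) := by
        rw [hp, Real.rpow_sub (by linarith), Real.rpow_one]
        field_simp
      rw [h8, hnp] at h7; linarith
    have hpow1 : (1:ℝ) ≤ (n:ℝ)^(1-α) := Real.one_le_rpow (by linarith) (by linarith)
    have hMfin : (M:ℝ) < (2*k+1) * (n:ℝ)^(1-α) := by
      have : (2*k+1) * (n:ℝ)^(1-α) = 2*k*(n:ℝ)^(1-α) + (n:ℝ)^(1-α) := by ring
      linarith
    have hE := Real.exp_pos (-(1/2) * X)
    calc (M:ℝ) * ((ℓ.choose δ : ℝ) * p^δ) ≤ (M:ℝ) * Real.exp (-(1/2)*X) :=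
        mul_le_mul_of_nonneg_left (le_trans h1 hfle) (by positivity)
      _ < (2*k+1) * (n:ℝ)^(1-α) * Real.exp (-(1/2)*X) :=
        mul_lt_mul_of_pos_right hMfin hE
  refine lt_of_le_of_lt key ?_
  rw [hconv]
  exact (ENNReal.ofReal_lt_ofReal_iff (by positivity)).mpr hreal
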